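/- arXiv:1005.2149 — 3 statements merged into one kernel-verified Lean document; each statement's English description precedes it below -/
import Mathlib

section
/- Let J_n, J be bounded self-adjoint operators on ℓ²(ℤ) with J_n → J in the strong operator topology and ‖J_n‖ ≤ R for all n. If K_n, K are non-empty compact subsets of ℝ with h(K_n, K) → 0 in Hausdorff distance and σ(J_n) ⊆ K_n for all n, then σ(J) ⊆ K. -/
open Filter

/-- ℓ²(ℤ) over ℂ. -/
noncomputable abbrev SeqSpace : Type := lp (fun _ : ℤ => ℂ) 2

open Pointwise

/-- Lower bound for a self-adjoint operator away from its spectrum. -/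
lemma aux_lower_bound (A : SeqSpace →L[ℂ] SeqSpace) (hA : IsSelfAdjoint A)
    (x : ℂ) (hx : IsSelfAdjoint x) (r : ℝ) (hr : 0 < r)
    (hsp : ∀ z ∈ spectrum ℂ A, r ≤ ‖z - x‖) (v : SeqSpace) :
    r * ‖v‖ ≤ ‖A v - x • v‖ := by
  set T : SeqSpace →L[ℂ] SeqSpace := A - algebraMap ℂ _ x with hTdef
  have hT : IsSelfAdjoint T := hA.sub (hx.algebraMap _)
  have hspecT : spectrum ℂ T = spectrum ℂ A - {x} :=
    (spectrum.sub_singleton_eq A x).symm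
  have h0 : (0 : ℂ) ∉ spectrum ℂ T := by
    rw [hspecT]
    rintro ⟨z, hz, w, hw, hzw⟩
    rw [Set.mem_singleton_iff] at hw
    have h1 : z - w = 0 := hzw
    have hzx : z = x := hw ▸ sub_eq_zero.mp h1
    have := hsp z hz
    rw [hzx, sub_self, norm_zero] at this
    linarith
  have hTu : IsUnit T := spectrum.isUnit_of_zero_notMem ℂ h0
  obtain ⟨u, hu⟩ := hTu
  set B : SeqSpace →L[ℂ] SeqSpace := ↑u⁻¹ with hBdef
  have hTB : T * B = 1 := by rw [hBdef, ← hu]; exact u.mul_inv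
  have hBT : B * T = 1 := by rw [hBdef, ← hu]; exact u.inv_mul
  have hB : IsSelfAdjoint B := by
    have h1 : star B * T = 1 := by
      have := congrArg star hTB
      rwa [star_mul, hT.star_eq, star_one] at this
    calc star B = star B * (T * B) := by rw [hTB, mul_one]
    _ = (star B * T) * B := by rw [mul_assoc]
    _ = B := by rw [h1, one_mul]
  -- spectral radius bound
  have hrad : spectralRadius ℂ B ≤ ENNReal.ofReal r⁻¹ := by
    rw [spectralRadius]
    refine iSup₂_le fun z hz => ?_
    have hz0 : z ≠ 0 := by
      rintro rfl
      exact spectrum.zero_notMem ℂ (u⁻¹).isUnit hz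
    have hzinv : z⁻¹ ∈ spectrum ℂ T := by
      have h := (spectrum.inv_mem_iff (r := Units.mk0 z hz0) (a := u⁻¹)).mp hz
      rwa [inv_inv, hu] at h
    rw [hspecT] at hzinv
    obtain ⟨w, hw, s, hs, hws⟩ := hzinv
    rw [Set.mem_singleton_iff] at hs; subst hs
    have hrz : r ≤ ‖z⁻¹‖ := hws ▸ hsp w hw
    have hz1 : ‖z‖ ≤ r⁻¹ := by
      rw [norm_inv] at hrz
      rw [← inv_inv ‖z‖]
      exact inv_anti₀ hr hrz
    calc (‖z‖₊ : ENNReal) = ENNReal.ofReal ‖z‖ := (ofReal_norm z).symm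
    _ ≤ ENNReal.ofReal r⁻¹ := ENNReal.ofReal_le_ofReal hz1
  have hBnorm : ‖B‖ ≤ r⁻¹ := by
    have h := hB.spectralRadius_eq_nnnorm ▸ hrad
    rw [← enorm_eq_nnnorm, ← ofReal_norm] at h
    exact (ENNReal.ofReal_le_ofReal_iff (by positivity)).mp h
  have hv : ‖v‖ ≤ r⁻¹ * ‖T v‖ := by
    have : v = B (T v) := by
      have := congrArg (fun f : SeqSpace →L[ℂ] SeqSpace => f v) hBT
      simpa [ContinuousLinearMap.mul_apply] using this.symm
    calc ‖v‖ = ‖B (T v)‖ := by rw [← this]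
    _ ≤ ‖B‖ * ‖T v‖ := B.le_opNorm _
    _ ≤ r⁻¹ * ‖T v‖ := by gcongr
  have hTv : T v = A v - x • v := by
    simp [hTdef, ContinuousLinearMap.sub_apply, Algebra.algebraMap_eq_smul_one,
      ContinuousLinearMap.smul_apply, ContinuousLinearMap.one_apply]
  rw [← hTv]
  calc r * ‖v‖ ≤ r * (r⁻¹ * ‖T v‖) := by gcongr
  _ = ‖T v‖ := by field_simp

set_option maxHeartbeats 1000000 in
theorem spectrum_subset_of_strong_limit
    (R : ℝ) (J : ℕ → SeqSpace →L[ℂ] SeqSpace) (J₀ : SeqSpace →L[ℂ] SeqSpace)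
    (hsa : ∀ n, IsSelfAdjoint (J n)) (hsa₀ : IsSelfAdjoint J₀)
    (hbd : ∀ n, ‖J n‖ ≤ R)
    (hSOT : ∀ v : SeqSpace, Tendsto (fun n => J n v) atTop (nhds (J₀ v)))
    (K : ℕ → Set ℝ) (K₀ : Set ℝ)
    (hKn : ∀ n, IsCompact (K n) ∧ (K n).Nonempty)
    (hK₀ : IsCompact K₀ ∧ K₀.Nonempty)
    (hH : Tendsto (fun n => Metric.hausdorffDist (K n) K₀) atTop (nhds 0))
    (hspec : ∀ n, spectrum ℂ (J n) ⊆ (fun x : ℝ => (x : ℂ)) '' (K n)) :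
    spectrum ℂ J₀ ⊆ (fun x : ℝ => (x : ℂ)) '' K₀ := by
  intro x hx
  have hxre : x = (x.re : ℂ) := hsa₀.mem_spectrum_eq_re hx
  set μ : ℝ := x.re with hμdef
  refine ⟨μ, ?_, hxre.symm⟩
  by_contra hμ
  set r : ℝ := Metric.infDist μ K₀ with hrdef
  have hr : 0 < r := (hK₀.1.isClosed.notMem_iff_infDist_pos hK₀.2).mp hμ
  -- eventually Hausdorff distance < r/2
  have hev : ∀ᶠ n in atTop, Metric.hausdorffDist (K n) K₀ < r / 2 := by
    have := hH.eventually (gt_mem_nhds (show (0:ℝ) < r / 2 by linarith))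
    simpa using this
  -- eventual lower bound
  have hlow : ∀ᶠ n in atTop, ∀ v : SeqSpace, (r / 2) * ‖v‖ ≤ ‖J n v - x • v‖ := by
    filter_upwards [hev] with n hn
    intro v
    refine aux_lower_bound (J n) (hsa n) x ?_ (r / 2) (by linarith) ?_ v
    · rw [hxre]
      exact Complex.conj_ofReal μ
    · intro z hz
      obtain ⟨t, ht, rfl⟩ := hspec n hz
      have hfin := Metric.hausdorffEdist_ne_top_of_nonempty_of_bounded (hKn n).2 hK₀.2
          (hKn n).1.isBounded hK₀.1.isBounded
      have h1 : Metric.infDist t K₀ ≤ Metric.hausdorffDist (K n) K₀ :=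
        Metric.infDist_le_hausdorffDist_of_mem ht hfin
      have h2 : r ≤ Metric.infDist t K₀ + dist μ t :=
        Metric.infDist_le_infDist_add_dist
      have h3 : r / 2 ≤ dist μ t := by
        have := h1.trans_lt hn
        linarith
      have : ‖(t : ℂ) - x‖ = dist t μ := by
        rw [hxre, ← Complex.ofReal_sub, Complex.norm_real, Real.norm_eq_abs,
          Real.dist_eq]
      rw [this, dist_comm]
      exact h3
  -- lower bound for the limit operator
  have hlow₀ : ∀ v : SeqSpace, (r / 2) * ‖v‖ ≤ ‖J₀ v - x • v‖ := by
    intro v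
    have htend : Tendsto (fun n => ‖J n v - x • v‖) atTop (nhds ‖J₀ v - x • v‖) :=
      ((hSOT v).sub tendsto_const_nhds).norm
    refine ge_of_tendsto htend ?_
    filter_upwards [hlow] with n hn using hn v
  -- the operator J₀ - x is bounded below, hence invertible
  set T : SeqSpace →L[ℂ] SeqSpace := J₀ - algebraMap ℂ _ x with hTdef
  have hTv : ∀ v : SeqSpace, T v = J₀ v - x • v := fun v => by
    simp [hTdef, ContinuousLinearMap.sub_apply, Algebra.algebraMap_eq_smul_one,
      ContinuousLinearMap.smul_apply, ContinuousLinearMap.one_apply]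
  have hTlow : ∀ v : SeqSpace, (r / 2) * ‖v‖ ≤ ‖T v‖ := fun v => (hTv v) ▸ hlow₀ v
  have hanti : AntilipschitzWith ((r / 2)⁻¹).toNNReal T := by
    refine ContinuousLinearMap.antilipschitz_of_bound T fun v => ?_
    have h := hTlow v
    rw [Real.coe_toNNReal _ (by positivity)]
    have h2 : ‖v‖ = (r / 2)⁻¹ * ((r / 2) * ‖v‖) := by
      field_simp
    rw [h2]
    gcongr
  have hTsa : IsSelfAdjoint T := by
    refine hsa₀.sub ?_
    rw [hxre]
    exact (show IsSelfAdjoint ((μ : ℝ) : ℂ) from Complex.conj_ofReal μ).algebraMap _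
  have hinj : Function.Injective T := hanti.injective
  have hclosed : IsClosed (Set.range T) := hanti.isClosed_range T.uniformContinuous
  have hrange : LinearMap.range (T : SeqSpace →ₗ[ℂ] SeqSpace) = ⊤ := by
    have hcl : IsClosed ((LinearMap.range (T : SeqSpace →ₗ[ℂ] SeqSpace) : Submodule ℂ SeqSpace) : Set SeqSpace) := by
      have : ((LinearMap.range (T : SeqSpace →ₗ[ℂ] SeqSpace) : Submodule ℂ SeqSpace) : Set SeqSpace) = Set.range T := by
        ext w; simp [LinearMap.mem_range]
      rw [this]; exact hclosed
    haveI : CompleteSpace (LinearMap.range (T : SeqSpace →ₗ[ℂ] SeqSpace)) := hcl.completeSpace_coe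
    rw [← Submodule.orthogonal_eq_bot_iff, Submodule.eq_bot_iff]
    intro w hw
    rw [Submodule.mem_orthogonal] at hw
    have hsymm := ContinuousLinearMap.isSelfAdjoint_iff_isSymmetric.mp hTsa
    have hTw : T w = 0 := by
      have h0 : ∀ u : SeqSpace, inner (𝕜 := ℂ) u (T w) = 0 := fun u =>
        (hsymm u w).symm.trans (hw (T u) (LinearMap.mem_range_self _ u))
      exact inner_self_eq_zero.mp (h0 (T w))
    have hbelow := hTlow w
    rw [hTw, norm_zero] at hbelow
    have : ‖w‖ ≤ 0 := by nlinarith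
    exact norm_le_zero_iff.mp this
  have hbij : Function.Bijective T := ⟨hinj, LinearMap.range_eq_top.mp hrange⟩
  have hunit : IsUnit T := ContinuousLinearMap.isUnit_iff_bijective.mpr hbij
  have hnot : x ∉ spectrum ℂ J₀ := by
    rw [spectrum.notMem_iff]
    have heq : algebraMap ℂ (SeqSpace →L[ℂ] SeqSpace) x - J₀ = -T := by
      rw [hTdef, neg_sub]
    rw [heq]
    exact hunit.neg
  exact hnot hx
end

section
/- Let ξ : (−R, R) → [0,1] be measurable and define the Herglotz function H(z) = (z+R) exp(∫_{−R}^{R} ξ(t)/(t−z) dt) for z in the upper half plane. Then H is holomorphic on the upper half plane with positive imaginary part, and H(iy)/(iy) → 1 as y → ∞. -/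
open MeasureTheory Filter Complex

lemma KH_ne_zero {z : ℂ} (hz : 0 < z.im) (t : ℝ) : (t : ℂ) - z ≠ 0 := by
  intro h
  have h2 : ((t : ℂ) - z).im = 0 := by rw [h]; simp
  simp [Complex.sub_im] at h2
  linarith

lemma KH_norm_ge {z : ℂ} (hz : 0 < z.im) (t : ℝ) : z.im ≤ ‖(t : ℂ) - z‖ := by
  have h := Complex.abs_im_le_norm ((t : ℂ) - z)
  have h2 : ((t : ℂ) - z).im = -z.im := by simp [Complex.sub_im]
  rw [h2, abs_neg, abs_of_pos hz] at h
  exact h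

lemma KH_arg_eq {w : ℂ} (hw : 0 < w.im) :
    w.arg = Real.pi / 2 - Real.arctan (w.re / w.im) := by
  have hw0 : w ≠ 0 := fun h => by simp [h] at hw
  set a := w.re / w.im with ha
  have hs : (0:ℝ) < Real.sqrt (1 + a ^ 2) := by positivity
  have habs : ‖w‖ = w.im * Real.sqrt (1 + a ^ 2) := by
    rw [Complex.norm_def, Complex.normSq_apply,
      show w.re * w.re + w.im * w.im = w.im ^ 2 * (1 + a ^ 2) by
        rw [ha]; field_simp; ring]
    rw [Real.sqrt_mul (sq_nonneg _), Real.sqrt_sq hw.le]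
  have key : w = (‖w‖ : ℂ) *
      (Real.cos (Real.pi / 2 - Real.arctan a) + Real.sin (Real.pi / 2 - Real.arctan a) * Complex.I) := by
    rw [Real.cos_pi_div_two_sub, Real.sin_pi_div_two_sub, Real.sin_arctan, Real.cos_arctan]
    apply Complex.ext
    · simp [habs]
      field_simp [ha]
      rw [ha, mul_div_cancel₀ _ hw.ne']
    · simp [habs]
      field_simp
  conv_lhs => rw [key, Complex.ofReal_cos, Complex.ofReal_sin]
  refine Complex.arg_mul_cos_add_sin_mul_I (norm_pos_iff.mpr hw0) ⟨?_, ?_⟩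
  · have := Real.arctan_lt_pi_div_two a
    have := Real.pi_pos
    linarith
  · have := Real.neg_pi_div_two_lt_arctan a
    linarith

lemma KH_integrable {R : ℝ} {ξ : ℝ → ℝ} (hmeas : Measurable ξ) (hξ : ∀ t, 0 ≤ ξ t ∧ ξ t ≤ 1)
    {z : ℂ} (hz : 0 < z.im) :
    IntegrableOn (fun t : ℝ => (ξ t : ℂ) / ((t : ℂ) - z)) (Set.Ioo (-R) R) := by
  refine Integrable.mono' (g := fun _ => z.im⁻¹) ?_ ?_ ?_
  · exact integrableOn_const measure_Ioo_lt_top.ne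
  · exact (((Complex.measurable_ofReal.comp hmeas).div
      (Complex.measurable_ofReal.sub measurable_const))).aestronglyMeasurable
  · refine Eventually.of_forall fun t => ?_
    rw [norm_div]
    have h1 : ‖(ξ t : ℂ)‖ ≤ 1 := by
      rw [Complex.norm_real, Real.norm_eq_abs, _root_.abs_of_nonneg (hξ t).1]
      exact (hξ t).2
    have h2 : z.im ≤ ‖(t : ℂ) - z‖ := KH_norm_ge hz t
    calc ‖(ξ t : ℂ)‖ / ‖(t : ℂ) - z‖ ≤ 1 / z.im := div_le_div₀ zero_le_one h1 hz h2
      _ = z.im⁻¹ := one_div _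

lemma KH_im_eq {z : ℂ} (hz : 0 < z.im) (c t : ℝ) :
    ((c : ℂ) / ((t : ℂ) - z)).im = c * (z.im / ((t - z.re) ^ 2 + z.im ^ 2)) := by
  have hns : Complex.normSq ((t : ℂ) - z) = (t - z.re) ^ 2 + z.im ^ 2 := by
    simp [Complex.normSq_apply, Complex.sub_re, Complex.sub_im]; ring
  rw [Complex.div_im, hns]
  simp [Complex.sub_im, Complex.sub_re]
  ring

lemma KH_integral_g {R : ℝ} (hR : 0 < R) {x y : ℝ} (hy : 0 < y) :
    ∫ t in Set.Ioo (-R) R, y / ((t - x) ^ 2 + y ^ 2) =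
      Real.arctan ((R - x) / y) - Real.arctan ((-R - x) / y) := by
  have hcont : Continuous fun t : ℝ => y / ((t - x) ^ 2 + y ^ 2) :=
    continuous_const.div (by continuity) (fun t => by positivity)
  rw [← MeasureTheory.integral_Ioc_eq_integral_Ioo,
    ← intervalIntegral.integral_of_le (by linarith : -R ≤ R)]
  refine intervalIntegral.integral_eq_sub_of_hasDerivAt
    (f := fun t => Real.arctan ((t - x) / y)) (fun t _ => ?_)
    (hcont.intervalIntegrable _ _)
  have h1 : HasDerivAt (fun t : ℝ => (t - x) / y) (1 / y) t := by
    simpa using ((hasDerivAt_id t).sub_const x).div_const y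
  have h2 := (Real.hasDerivAt_arctan ((t - x) / y)).comp t h1
  refine h2.congr_deriv ?_
  field_simp
  ring

lemma KH_im_int_bounds {R : ℝ} (hR : 0 < R) {ξ : ℝ → ℝ} (hmeas : Measurable ξ)
    (hξ : ∀ t, 0 ≤ ξ t ∧ ξ t ≤ 1) {z : ℂ} (hz : 0 < z.im) :
    0 ≤ (∫ t in Set.Ioo (-R) R, (ξ t : ℂ) / ((t : ℂ) - z)).im ∧
    (∫ t in Set.Ioo (-R) R, (ξ t : ℂ) / ((t : ℂ) - z)).im ≤
      Real.arctan ((R - z.re) / z.im) - Real.arctan ((-R - z.re) / z.im) := by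
  have hint := KH_integrable (R := R) hmeas hξ hz
  set g : ℝ → ℝ := fun t => z.im / ((t - z.re) ^ 2 + z.im ^ 2) with hg
  have hgcont : Continuous g :=
    continuous_const.div (by continuity) (fun t => by positivity)
  have hgnn : ∀ t, 0 ≤ g t := fun t => by
    have := hz; positivity
  have hg_int : IntegrableOn g (Set.Ioo (-R) R) :=
    (hgcont.integrableOn_Icc).mono_set Set.Ioo_subset_Icc_self
  have him : (∫ t in Set.Ioo (-R) R, (ξ t : ℂ) / ((t : ℂ) - z)).im
      = ∫ t in Set.Ioo (-R) R, ξ t * g t := by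
    have h0 := integral_im (𝕜 := ℂ) hint
    rw [RCLike.im_eq_complex_im] at h0
    rw [← h0]
    refine integral_congr_ae (Eventually.of_forall fun t => ?_)
    simpa using KH_im_eq hz (ξ t) t
  have hprod_int : IntegrableOn (fun t => ξ t * g t) (Set.Ioo (-R) R) := by
    refine Integrable.mono' hg_int
      ((hmeas.mul hgcont.measurable).aestronglyMeasurable) ?_
    refine Eventually.of_forall fun t => ?_
    rw [Real.norm_eq_abs, _root_.abs_of_nonneg (mul_nonneg (hξ t).1 (hgnn t))]
    exact mul_le_of_le_one_left (hgnn t) (hξ t).2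
  constructor
  · rw [him]
    exact setIntegral_nonneg measurableSet_Ioo fun t _ => mul_nonneg (hξ t).1 (hgnn t)
  · rw [him, ← KH_integral_g hR hz]
    exact setIntegral_mono_on hprod_int hg_int measurableSet_Ioo
      fun t _ => mul_le_of_le_one_left (hgnn t) (hξ t).2

lemma KH_pos {R : ℝ} (hR : 0 < R) {ξ : ℝ → ℝ} (hmeas : Measurable ξ)
    (hξ : ∀ t, 0 ≤ ξ t ∧ ξ t ≤ 1) {z : ℂ} (hz : 0 < z.im) :
    0 < ((z + R) * Complex.exp (∫ t in Set.Ioo (-R) R, (ξ t : ℂ) / ((t : ℂ) - z))).im := by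
  set G := ∫ t in Set.Ioo (-R) R, (ξ t : ℂ) / ((t : ℂ) - z) with hG
  have hwim : (z + (R : ℂ)).im = z.im := by simp
  have hwre : (z + (R : ℂ)).re = z.re + R := by simp
  have hw0 : z + (R : ℂ) ≠ 0 := by
    intro h
    rw [h] at hwim
    simp at hwim
    linarith
  have harg : (z + (R : ℂ)).arg = Real.pi / 2 - Real.arctan ((z.re + R) / z.im) := by
    rw [KH_arg_eq (by rw [hwim]; exact hz), hwre, hwim]
  have hb := KH_im_int_bounds hR hmeas hξ (z := z) hz
  rw [← hG] at hb
  have hA := Real.arctan_lt_pi_div_two ((R - z.re) / z.im)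
  have hB : Real.arctan ((-R - z.re) / z.im) = -Real.arctan ((R + z.re) / z.im) := by
    rw [show (-R - z.re) / z.im = -((R + z.re) / z.im) by ring, Real.arctan_neg]
  have hC := Real.arctan_lt_pi_div_two ((z.re + R) / z.im)
  rw [← Complex.exp_log hw0, ← Complex.exp_add, Complex.exp_im]
  apply mul_pos (Real.exp_pos _)
  apply Real.sin_pos_of_pos_of_lt_pi
  · rw [Complex.add_im, Complex.log_im, harg]
    linarith [hb.1]
  · rw [Complex.add_im, Complex.log_im, harg]
    have := hb.2
    rw [hB] at this
    have : G.im ≤ Real.arctan ((R - z.re) / z.im) + Real.arctan ((z.re + R) / z.im) := by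
      rw [show (z.re + R) = (R + z.re) by ring]; linarith
    linarith

lemma KH_diff {R : ℝ} {ξ : ℝ → ℝ} (hmeas : Measurable ξ)
    (hξ : ∀ t, 0 ≤ ξ t ∧ ξ t ≤ 1) {z₀ : ℂ} (hz : 0 < z₀.im) :
    DifferentiableAt ℂ (fun z => ∫ t in Set.Ioo (-R) R, (ξ t : ℂ) / ((t : ℂ) - z)) z₀ := by
  have hball : ∀ z ∈ Metric.ball z₀ (z₀.im / 2), z₀.im / 2 < z.im := by
    intro z hz'
    have h1 := Complex.abs_im_le_norm (z - z₀)
    rw [Complex.sub_im] at h1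
    rw [Metric.mem_ball, Complex.dist_eq] at hz'
    have := abs_lt.mp (lt_of_le_of_lt h1 hz')
    linarith [this.1]
  have key := hasDerivAt_integral_of_dominated_loc_of_deriv_le
    (μ := volume.restrict (Set.Ioo (-R) R))
    (F := fun z (t : ℝ) => (ξ t : ℂ) / ((t : ℂ) - z))
    (F' := fun z (t : ℝ) => (ξ t : ℂ) * (((t : ℂ) - z) ^ 2)⁻¹)
    (x₀ := z₀) (bound := fun _ => ((z₀.im / 2) ^ 2)⁻¹)
    (Metric.ball_mem_nhds z₀ (by positivity : (0:ℝ) < z₀.im / 2))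
    (Eventually.of_forall fun x =>
      (((Complex.measurable_ofReal.comp hmeas).div
        (Complex.measurable_ofReal.sub measurable_const))).aestronglyMeasurable)
    (KH_integrable hmeas hξ hz)
    (((Complex.measurable_ofReal.comp hmeas).mul
      (((Complex.measurable_ofReal.sub measurable_const).pow_const 2).inv)).aestronglyMeasurable)
    (Eventually.of_forall fun t => ?_)
    (integrableOn_const measure_Ioo_lt_top.ne)
    (Eventually.of_forall fun t => ?_)
  · exact key.2.differentiableAt
  · intro z hz'
    have him : 0 < z.im := lt_trans (by positivity) (hball z hz')
    have h2 : z₀.im / 2 ≤ ‖(t : ℂ) - z‖ := le_trans (hball z hz').le (KH_norm_ge him t)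
    rw [norm_mul, norm_inv, norm_pow]
    have h3 : ((‖(t : ℂ) - z‖ ^ 2)⁻¹ : ℝ) ≤ ((z₀.im / 2) ^ 2)⁻¹ := by
      apply inv_anti₀ (by positivity)
      nlinarith
    have h4 : ‖(ξ t : ℂ)‖ ≤ 1 := by
      rw [Complex.norm_real, Real.norm_eq_abs, _root_.abs_of_nonneg (hξ t).1]
      exact (hξ t).2
    calc ‖(ξ t : ℂ)‖ * (‖(t : ℂ) - z‖ ^ 2)⁻¹ ≤ 1 * ((z₀.im / 2) ^ 2)⁻¹ :=
          mul_le_mul h4 h3 (by positivity) zero_le_one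
      _ = ((z₀.im / 2) ^ 2)⁻¹ := one_mul _
  · intro z hz'
    have him : 0 < z.im := lt_trans (by positivity) (hball z hz')
    have hne : (t : ℂ) - z ≠ 0 := KH_ne_zero him t
    have h1 : HasDerivAt (fun z : ℂ => (t : ℂ) - z) (-1) z := by
      simpa using (hasDerivAt_id z).const_sub ((t : ℂ))
    have h3 := (h1.inv hne).const_mul ((ξ t : ℂ))
    have : -(-1) / ((t : ℂ) - z) ^ 2 = (((t : ℂ) - z) ^ 2)⁻¹ := by
      rw [neg_neg, one_div]
    rw [this] at h3
    simpa [div_eq_mul_inv] using h3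

lemma KH_tendsto_int {R : ℝ} (hR : 0 < R) {ξ : ℝ → ℝ} (hmeas : Measurable ξ)
    (hξ : ∀ t, 0 ≤ ξ t ∧ ξ t ≤ 1) :
    Tendsto (fun y : ℝ => ∫ t in Set.Ioo (-R) R, (ξ t : ℂ) / ((t : ℂ) - (y : ℂ) * Complex.I))
      atTop (nhds 0) := by
  apply squeeze_zero_norm' (a := fun y : ℝ => y⁻¹ * (2 * R))
  · filter_upwards [eventually_gt_atTop (0 : ℝ)] with y hy
    have him : (0 : ℝ) < ((y : ℂ) * Complex.I).im := by simpa using hy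
    have hb : ‖∫ t in Set.Ioo (-R) R, (ξ t : ℂ) / ((t : ℂ) - (y : ℂ) * Complex.I)‖
        ≤ y⁻¹ * (volume (Set.Ioo (-R) R)).toReal := by
      apply norm_setIntegral_le_of_norm_le_const_ae measure_Ioo_lt_top
      refine Eventually.of_forall fun t => ?_
      rw [norm_div]
      have h1 : ‖(ξ t : ℂ)‖ ≤ 1 := by
        rw [Complex.norm_real, Real.norm_eq_abs, _root_.abs_of_nonneg (hξ t).1]
        exact (hξ t).2
      have h2 : ((y : ℂ) * Complex.I).im ≤ ‖(t : ℂ) - (y : ℂ) * Complex.I‖ :=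
        KH_norm_ge him t
      rw [show ((y : ℂ) * Complex.I).im = y by simp] at h2
      calc ‖(ξ t : ℂ)‖ / ‖(t : ℂ) - (y : ℂ) * Complex.I‖ ≤ 1 / y :=
            div_le_div₀ zero_le_one h1 hy h2
        _ = y⁻¹ := one_div _
    rw [Real.volume_Ioo, show R - -R = 2 * R by ring, ENNReal.toReal_ofReal (by positivity)] at hb
    exact hb
  · have := tendsto_inv_atTop_zero (𝕜 := ℝ)
    simpa using this.mul_const (2 * R)

theorem krein_representation_herglotz (R : ℝ) (hR : 0 < R)
    (ξ : ℝ → ℝ) (hmeas : Measurable ξ) (hξ : ∀ t, 0 ≤ ξ t ∧ ξ t ≤ 1)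
    (H : ℂ → ℂ)
    (hH : ∀ z : ℂ, H z =
      (z + R) * Complex.exp (∫ t in Set.Ioo (-R) R, (ξ t : ℂ) / ((t : ℂ) - z))) :
    DifferentiableOn ℂ H {z : ℂ | 0 < z.im} ∧
    (∀ z : ℂ, 0 < z.im → 0 < (H z).im) ∧
    Tendsto (fun y : ℝ => H (y * Complex.I) / (y * Complex.I)) atTop (nhds 1) := by
  have hHeq : H = fun z => (z + R) *
      Complex.exp (∫ t in Set.Ioo (-R) R, (ξ t : ℂ) / ((t : ℂ) - z)) := funext hH
  refine ⟨?_, ?_, ?_⟩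
  · intro z hz
    rw [hHeq]
    exact ((differentiableAt_id.add (differentiableAt_const _)).mul
      (KH_diff hmeas hξ hz).cexp).differentiableWithinAt
  · intro z hz
    rw [hH z]
    exact KH_pos hR hmeas hξ hz
  · have h1 : Tendsto (fun y : ℝ => ((y : ℂ) * Complex.I + R) / ((y : ℂ) * Complex.I))
        atTop (nhds 1) := by
      have t0 : Tendsto (fun y : ℝ => (R : ℂ) / ((y : ℂ) * Complex.I)) atTop (nhds 0) := by
        apply squeeze_zero_norm' (a := fun y : ℝ => R * y⁻¹)
        · filter_upwards [eventually_gt_atTop (0 : ℝ)] with y hy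
          rw [norm_div, Complex.norm_real, norm_mul, Complex.norm_real, Complex.norm_I,
            mul_one, Real.norm_eq_abs, Real.norm_eq_abs, _root_.abs_of_pos hR,
            _root_.abs_of_pos hy, div_eq_mul_inv]
        · simpa using (tendsto_inv_atTop_zero (𝕜 := ℝ)).const_mul R
      have := tendsto_const_nhds (x := (1 : ℂ)) (f := atTop (α := ℝ)) |>.add t0
      rw [add_zero] at this
      refine this.congr' ?_
      filter_upwards [eventually_gt_atTop (0 : ℝ)] with y hy
      have hy0 : (y : ℂ) * Complex.I ≠ 0 := by
        simp [Complex.ext_iff, hy.ne']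
      have : (y : ℂ) ≠ 0 := by exact_mod_cast hy.ne'
      field_simp
    have h2 : Tendsto (fun y : ℝ =>
        Complex.exp (∫ t in Set.Ioo (-R) R, (ξ t : ℂ) / ((t : ℂ) - (y : ℂ) * Complex.I)))
        atTop (nhds 1) := by
      have := (Complex.continuous_exp.tendsto (0 : ℂ)).comp (KH_tendsto_int hR hmeas hξ)
      simpa [Function.comp_def] using this
    have := h1.mul h2
    rw [mul_one] at this
    refine this.congr fun y => ?_
    rw [hH]
    ring
end

section
/- Fix R > 0. The map ξ ↦ ρ from Krein functions to Herglotz measures is uniformly weak-*-continuous, and in particular: for any ε > 0 there exists δ > 0 such that whenever ξ₁, ξ₂ : (−R,R) → [0,1] satisfy ‖ξ₁−ξ₂‖_{L¹(−R,R)} < δ, the associated measures satisfy |ρ₁(ℝ) − ρ₂(ℝ)| < ε. -/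
open MeasureTheory Filter Complex

namespace KreinAux

lemma tendsto_of_bound {f : ℝ → ℂ} {c : ℂ} (C y₀ : ℝ)
    (h : ∀ y : ℝ, y₀ ≤ y → ‖f y - c‖ ≤ C / y) :
    Tendsto f atTop (nhds c) := by
  have h0 : Tendsto (fun y : ℝ => C / y) atTop (nhds 0) := by
    simpa [div_eq_mul_inv] using tendsto_inv_atTop_zero.const_mul C
  have h1 : Tendsto (fun y => f y - c) atTop (nhds 0) :=
    squeeze_zero_norm' (by filter_upwards [eventually_ge_atTop y₀] with y hy using h y hy) h0
  simpa using h1.add_const c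

lemma exp_cubic_bound (s : ℂ) (h : ‖s‖ ≤ 1) : ‖Complex.exp s - 1 - s - s^2/2‖ ≤ ‖s‖^3 := by
  have h3 := Complex.exp_bound h (n := 3) (by norm_num)
  have hsum : ∑ m ∈ Finset.range 3, s ^ m / (m.factorial : ℂ) = 1 + s + s^2/2 := by
    simp [Finset.sum_range_succ, Nat.factorial]
  rw [hsum] at h3
  calc ‖Complex.exp s - 1 - s - s^2/2‖
      = ‖Complex.exp s - (1 + s + s^2/2)‖ := by ring_nf
    _ ≤ ‖s‖ ^ 3 * (4 * (6*3)⁻¹) := by simpa [Nat.factorial] using h3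
    _ ≤ ‖s‖ ^ 3 := by nlinarith [pow_nonneg (norm_nonneg s) 3]

lemma exp_quad_bound (s : ℂ) (h : ‖s‖ ≤ 1) : ‖Complex.exp s - 1 - s‖ ≤ ‖s‖^2 := by
  exact Complex.norm_exp_sub_one_sub_id_le h

lemma mass_formula {R : ℝ} (hR : 0 < R) {ξ : ℝ → ℝ} {A : ℝ} {ρ : Measure ℝ}
    (hξ : Measurable ξ) (hξ01 : ∀ t, 0 ≤ ξ t ∧ ξ t ≤ 1)
    (hfin : IsFiniteMeasure ρ) (hsupp : ρ (Set.Ioo (-R) R)ᶜ = 0)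
    (heq : ∀ z : ℂ, 0 < z.im →
      (z + (R : ℂ)) * Complex.exp (∫ t in Set.Ioo (-R) R, (ξ t : ℂ) / ((t : ℂ) - z)) =
        z + (A : ℂ) + ∫ t, ((t : ℂ) - z)⁻¹ ∂ρ) :
    (ρ Set.univ).toReal =
      R * (∫ t in Set.Ioo (-R) R, ξ t) + (∫ t in Set.Ioo (-R) R, t * ξ t)
        - (∫ t in Set.Ioo (-R) R, ξ t) ^ 2 / 2 := by
  haveI := hfin
  set Io := Set.Ioo (-R) R with hIo_def
  have hIoM : MeasurableSet Io := measurableSet_Ioo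
  have hvol : volume Io = ENNReal.ofReal (2*R) := by
    rw [hIo_def, Real.volume_Ioo]; congr 1; ring
  have hvollt : volume Io < ⊤ := by rw [hvol]; exact ENNReal.ofReal_lt_top
  have hvolR : (volume Io).toReal = 2*R := by
    rw [hvol, ENNReal.toReal_ofReal (by linarith)]
  haveI : IsFiniteMeasure (volume.restrict Io) :=
    ⟨by rwa [Measure.restrict_apply_univ]⟩
  set m := ∫ t in Io, ξ t with hm_def
  set M := ∫ t in Io, t * ξ t with hM_def
  have hnr : ∀ r : ℝ, ‖(r:ℂ)‖ = |r| := fun r => by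
    rw [Complex.norm_real, Real.norm_eq_abs]
  -- pointwise facts
  have hne : ∀ (t y : ℝ), 0 < y → ((t:ℂ) - Complex.I * y) ≠ 0 := by
    intro t y hy h
    have := congrArg Complex.im h
    simp [Complex.sub_im, Complex.mul_im] at this
    linarith
  have hinv : ∀ (t y : ℝ), 0 < y → ‖((t:ℂ) - Complex.I * y)⁻¹‖ ≤ 1 / y := by
    intro t y hy
    have h1 : |((t:ℂ) - Complex.I * y).im| ≤ ‖((t:ℂ) - Complex.I * y)‖ :=
      Complex.abs_im_le_norm _
    have h2 : ((t:ℂ) - Complex.I * y).im = -y := by simp [Complex.sub_im, Complex.mul_im]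
    rw [h2, abs_neg, abs_of_pos hy] at h1
    rw [norm_inv, one_div]
    exact inv_anti₀ hy (by simpa using h1)
  have hξabs : ∀ t, |ξ t| ≤ 1 := fun t => abs_le.2 ⟨by linarith [(hξ01 t).1], (hξ01 t).2⟩
  have htabs : ∀ t ∈ Io, |t| ≤ R := by
    intro t ht
    rw [hIo_def] at ht
    exact abs_le.2 ⟨le_of_lt ht.1, le_of_lt ht.2⟩
  -- the key pointwise bound: ‖ξ t * t^k / (t - iy)‖ ≤ R^k / y on Io
  have hptbd : ∀ (y : ℝ), 0 < y → ∀ (k : ℕ) (t : ℝ), t ∈ Io →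
      ‖(ξ t : ℂ) * (t:ℂ)^k / ((t:ℂ) - Complex.I * y)‖ ≤ R^k / y := by
    intro y hy k t ht
    rw [div_eq_mul_inv, norm_mul, norm_mul, norm_pow, hnr, hnr]
    have h1 : |ξ t| * |t| ^ k ≤ 1 * R^k := by
      apply mul_le_mul (hξabs t) (pow_le_pow_left₀ (abs_nonneg t) (htabs t ht) k)
        (pow_nonneg (abs_nonneg t) k) one_pos.le
    calc |ξ t| * |t|^k * ‖((t:ℂ) - Complex.I*y)⁻¹‖ ≤ (1 * R^k) * (1/y) := by
          apply mul_le_mul h1 (hinv t y hy) (norm_nonneg _) (by positivity)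
      _ = R^k / y := by ring
  -- measurability
  have hmes0 : Measurable (fun t : ℝ => (ξ t : ℂ)) := Complex.measurable_ofReal.comp hξ
  have hmesd : ∀ y : ℝ, Measurable (fun t : ℝ => (t:ℂ) - Complex.I * y) :=
    fun y => Complex.measurable_ofReal.sub measurable_const
  have hmesk : ∀ (y : ℝ) (k : ℕ),
      Measurable (fun t : ℝ => (ξ t : ℂ) * (t:ℂ)^k / ((t:ℂ) - Complex.I * y)) :=
    fun y k => (hmes0.mul (Complex.measurable_ofReal.pow_const k)).div (hmesd y)
  -- generic integrability on Io
  have intOn : ∀ (g : ℝ → ℂ) (c : ℝ), Measurable g → (∀ t ∈ Io, ‖g t‖ ≤ c) →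
      IntegrableOn g Io volume := by
    intro g c hg hb
    refine Integrable.mono' (integrable_const c) hg.aestronglyMeasurable ?_
    exact (ae_restrict_iff' hIoM).2 (ae_of_all _ hb)
  have hint_k : ∀ (y : ℝ), 0 < y → ∀ k : ℕ,
      IntegrableOn (fun t => (ξ t : ℂ) * (t:ℂ)^k / ((t:ℂ) - Complex.I * y)) Io volume :=
    fun y hy k => intOn _ (R^k/y) (hmesk y k) (fun t ht => hptbd y hy k t ht)
  -- generic bound on such integrals
  have hintbd : ∀ (y : ℝ), 0 < y → ∀ k : ℕ,
      ‖∫ t in Io, (ξ t : ℂ) * (t:ℂ)^k / ((t:ℂ) - Complex.I * y)‖ ≤ 2 * R^(k+1) / y := by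
    intro y hy k
    have := norm_setIntegral_le_of_norm_le_const (μ := volume) hvollt
      (f := fun t => (ξ t : ℂ) * (t:ℂ)^k / ((t:ℂ) - Complex.I * y)) (C := R^k/y)
      (fun t ht => hptbd y hy k t ht)
    rw [measureReal_def, hvolR] at this
    calc ‖∫ t in Io, (ξ t : ℂ) * (t:ℂ)^k / ((t:ℂ) - Complex.I * y)‖ ≤ R^k/y * (2*R) := this
      _ = 2 * R^(k+1) / y := by ring
  have hξ_int : IntegrableOn (fun t : ℝ => (ξ t : ℂ)) Io volume :=
    intOn _ 1 hmes0 (fun t _ => by rw [hnr]; exact hξabs t)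
  have htξ_int : IntegrableOn (fun t : ℝ => Complex.I * (t:ℂ) * (ξ t : ℂ)) Io volume := by
    refine intOn _ R ((measurable_const.mul Complex.measurable_ofReal).mul hmes0) ?_
    intro t ht
    rw [norm_mul, norm_mul, Complex.norm_I, one_mul, hnr, hnr]
    calc |t| * |ξ t| ≤ R * 1 :=
          mul_le_mul (htabs t ht) (hξabs t) (abs_nonneg _) (le_of_lt hR)
      _ = R := mul_one R

  set s : ℝ → ℂ := fun y => ∫ t in Io, (ξ t : ℂ) / ((t:ℂ) - Complex.I * y) with hs_def
  have htξ_int' : IntegrableOn (fun t : ℝ => ((t * ξ t : ℝ) : ℂ)) Io volume := by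
    refine intOn _ R (Complex.measurable_ofReal.comp (measurable_id.mul hξ)) ?_
    intro t ht
    rw [hnr, abs_mul]
    calc |t| * |ξ t| ≤ R * 1 :=
          mul_le_mul (htabs t ht) (hξabs t) (abs_nonneg _) (le_of_lt hR)
      _ = R := mul_one R
  have hint0 : ∀ y : ℝ, 0 < y →
      IntegrableOn (fun t => (ξ t : ℂ) / ((t:ℂ) - Complex.I * y)) Io volume := by
    intro y hy
    have := hint_k y hy 0
    refine this.congr_fun (fun t _ => by simp) hIoM
  have hs0 : ∀ y : ℝ, s y = ∫ t in Io, (ξ t : ℂ) * (t:ℂ)^0 / ((t:ℂ) - Complex.I * y) :=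
    fun y => setIntegral_congr_fun hIoM (fun t _ => by simp)
  have hs_le : ∀ y : ℝ, 0 < y → ‖s y‖ ≤ 2*R/y := by
    intro y hy
    rw [hs0 y]
    have := hintbd y hy 0
    simpa using this
  -- identity 2
  have hID2 : ∀ y : ℝ, 0 < y → Complex.I*y * s y + (m:ℂ) =
      ∫ t in Io, (ξ t : ℂ) * (t:ℂ)^1 / ((t:ℂ) - Complex.I * y) := by
    intro y hy
    have h1 : Complex.I*y * s y = ∫ t in Io, Complex.I*y * ((ξ t:ℂ) / ((t:ℂ) - Complex.I*y)) :=
      (integral_const_mul _ _).symm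
    have h2 : (m:ℂ) = ∫ t in Io, (ξ t:ℂ) := integral_ofReal.symm
    rw [h1, h2, ← integral_add ((hint0 y hy).const_mul _) hξ_int]
    refine setIntegral_congr_fun hIoM (fun t _ => ?_)
    field_simp [hne t y hy]
    ring
  -- identity 3
  have hID3 : ∀ y : ℝ, 0 < y → Complex.I*y * (Complex.I*y * s y + (m:ℂ)) + (M:ℂ) =
      ∫ t in Io, (ξ t : ℂ) * (t:ℂ)^2 / ((t:ℂ) - Complex.I * y) := by
    intro y hy
    have h1 : Complex.I*y * (Complex.I*y * s y + (m:ℂ)) =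
        ∫ t in Io, Complex.I*y * ((ξ t:ℂ) * (t:ℂ)^1 / ((t:ℂ) - Complex.I*y)) := by
      rw [hID2 y hy]; exact (integral_const_mul _ _).symm
    have h2 : (M:ℂ) = ∫ t in Io, ((t * ξ t : ℝ):ℂ) := integral_ofReal.symm
    rw [h1, h2, ← integral_add ((hint_k y hy 1).const_mul _) htξ_int']
    refine setIntegral_congr_fun hIoM (fun t _ => ?_)
    push_cast
    field_simp [hne t y hy]
    ring
  -- limits T2, T3
  have T2 : Tendsto (fun y : ℝ => Complex.I*y * s y) atTop (nhds (-(m:ℂ))) := by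
    refine tendsto_of_bound (2*R^2) 1 (fun y hy => ?_)
    have hy0 : (0:ℝ) < y := lt_of_lt_of_le one_pos hy
    rw [sub_neg_eq_add, hID2 y hy0]
    have := hintbd y hy0 1
    calc ‖∫ t in Io, (ξ t:ℂ) * (t:ℂ)^1 / ((t:ℂ) - Complex.I*y)‖ ≤ 2*R^(1+1)/y := this
      _ = 2*R^2/y := by norm_num
  have T3 : Tendsto (fun y : ℝ => Complex.I*y * (Complex.I*y * s y + (m:ℂ))) atTop
      (nhds (-(M:ℂ))) := by
    refine tendsto_of_bound (2*R^3) 1 (fun y hy => ?_)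
    have hy0 : (0:ℝ) < y := lt_of_lt_of_le one_pos hy
    rw [sub_neg_eq_add, hID3 y hy0]
    have := hintbd y hy0 2
    calc ‖∫ t in Io, (ξ t:ℂ) * (t:ℂ)^2 / ((t:ℂ) - Complex.I*y)‖ ≤ 2*R^(2+1)/y := this
      _ = 2*R^3/y := by norm_num

  -- y₀ threshold for exp bounds
  set y₀ : ℝ := max 1 (2*R) with hy₀_def
  have hy₀fact : ∀ y : ℝ, y₀ ≤ y → 0 < y ∧ 1 ≤ y ∧ 2*R ≤ y := by
    intro y hy
    have h1 : (1:ℝ) ≤ y := le_trans (le_max_left _ _) hy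
    exact ⟨lt_of_lt_of_le one_pos h1, h1, le_trans (le_max_right _ _) hy⟩
  have hs1 : ∀ y : ℝ, y₀ ≤ y → ‖s y‖ ≤ 1 := by
    intro y hy
    obtain ⟨hy0, hy1, hy2⟩ := hy₀fact y hy
    exact le_trans (hs_le y hy0) ((div_le_one hy0).2 hy2)
  have hnormIy : ∀ y : ℝ, 0 < y → ‖Complex.I * (y:ℂ)‖ = y := by
    intro y hy
    rw [norm_mul, Complex.norm_I, one_mul, hnr, abs_of_pos hy]
  -- P3 : (I y)^2 * cubic remainder → 0
  have P3lim : Tendsto (fun y : ℝ =>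
      (Complex.I*y)^2 * (Complex.exp (s y) - 1 - s y - (s y)^2/2)) atTop (nhds 0) := by
    refine tendsto_of_bound (8*R^3) y₀ (fun y hy => ?_)
    obtain ⟨hy0, hy1, hy2⟩ := hy₀fact y hy
    rw [sub_zero, norm_mul, norm_pow, hnormIy y hy0]
    have h1 : ‖Complex.exp (s y) - 1 - s y - (s y)^2/2‖ ≤ ‖s y‖^3 :=
      exp_cubic_bound (s y) (hs1 y hy)
    have h2 : ‖s y‖^3 ≤ (2*R/y)^3 :=
      pow_le_pow_left₀ (norm_nonneg _) (hs_le y hy0) 3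
    calc y^2 * ‖Complex.exp (s y) - 1 - s y - (s y)^2/2‖ ≤ y^2 * (2*R/y)^3 :=
          mul_le_mul_of_nonneg_left (le_trans h1 h2) (by positivity)
      _ = 8*R^3/y := by field_simp; ring
  -- P5 : R * (I y) * quadratic remainder → 0
  have P5lim : Tendsto (fun y : ℝ =>
      (R:ℂ) * (Complex.I*y) * (Complex.exp (s y) - 1 - s y)) atTop (nhds 0) := by
    refine tendsto_of_bound (4*R^3) y₀ (fun y hy => ?_)
    obtain ⟨hy0, hy1, hy2⟩ := hy₀fact y hy
    rw [sub_zero, norm_mul, norm_mul, hnormIy y hy0, hnr, abs_of_pos hR]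
    have h1 : ‖Complex.exp (s y) - 1 - s y‖ ≤ (2*R/y)^2 :=
      le_trans (exp_quad_bound (s y) (hs1 y hy))
        (pow_le_pow_left₀ (norm_nonneg _) (hs_le y hy0) 2)
    calc R * y * ‖Complex.exp (s y) - 1 - s y‖ ≤ R * y * (2*R/y)^2 :=
          mul_le_mul_of_nonneg_left h1 (by positivity)
      _ = 4*R^3/y := by field_simp; ring
  have P2lim : Tendsto (fun y : ℝ =>
      (Complex.I*y*s y) * (Complex.I*y*s y) / 2) atTop
      (nhds ((-(m:ℂ)) * (-(m:ℂ)) / 2)) := (T2.mul T2).div_const 2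
  have P4lim : Tendsto (fun y : ℝ => (R:ℂ) * (Complex.I*y*s y)) atTop
      (nhds ((R:ℂ) * (-(m:ℂ)))) := T2.const_mul _
  -- combined limit of G
  have hG : Tendsto (fun y : ℝ =>
      Complex.I*y * ((Complex.I*y + R) * Complex.exp (s y) - Complex.I*y - ((R:ℂ) - m)))
      atTop (nhds (-(M:ℂ) + (-(m:ℂ)) * (-(m:ℂ)) / 2 + 0 + (R:ℂ) * (-(m:ℂ)) + 0)) := by
    have h := (((T3.add P2lim).add P3lim).add P4lim).add P5lim
    refine h.congr (fun y => ?_)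
    ring

  -- measure side
  have hTint : ∀ y : ℝ, 0 < y → Integrable (fun t : ℝ => ((t:ℂ) - Complex.I*y)⁻¹) ρ := by
    intro y hy
    exact Integrable.mono' (integrable_const (1/y)) ((hmesd y).inv.aestronglyMeasurable)
      (ae_of_all _ (fun t => hinv t y hy))
  have hρae : ∀ᵐ t ∂ρ, t ∈ Io := by
    rw [ae_iff]
    exact hsupp
  have hTlim0 : Tendsto (fun y : ℝ => ∫ t, ((t:ℂ) - Complex.I*y)⁻¹ ∂ρ) atTop (nhds 0) := by
    refine tendsto_of_bound ((ρ Set.univ).toReal) 1 (fun y hy => ?_)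
    have hy0 : (0:ℝ) < y := lt_of_lt_of_le one_pos hy
    rw [sub_zero]
    have := norm_integral_le_of_norm_le_const (μ := ρ)
      (f := fun t : ℝ => ((t:ℂ) - Complex.I*y)⁻¹) (C := 1/y)
      (ae_of_all _ (fun t => hinv t y hy0))
    calc ‖∫ t, ((t:ℂ) - Complex.I*y)⁻¹ ∂ρ‖ ≤ 1/y * (ρ Set.univ).toReal := this
      _ = (ρ Set.univ).toReal / y := by ring
  have hTlimG : Tendsto (fun y : ℝ => Complex.I*y * ∫ t, ((t:ℂ) - Complex.I*y)⁻¹ ∂ρ) atTop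
      (nhds (-(((ρ Set.univ).toReal : ℝ) : ℂ))) := by
    refine tendsto_of_bound (R * (ρ Set.univ).toReal) 1 (fun y hy => ?_)
    have hy0 : (0:ℝ) < y := lt_of_lt_of_le one_pos hy
    have hone : (((ρ Set.univ).toReal : ℝ) : ℂ) = ∫ _t, (1:ℂ) ∂ρ := by
      rw [integral_const]; simp; rfl
    have hid : Complex.I*y * (∫ t, ((t:ℂ) - Complex.I*y)⁻¹ ∂ρ) - (-(((ρ Set.univ).toReal : ℝ) : ℂ)) =
        ∫ t, (t:ℂ) / ((t:ℂ) - Complex.I*y) ∂ρ := by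
      rw [sub_neg_eq_add, ← integral_const_mul, hone,
        ← integral_add ((hTint y hy0).const_mul _) (integrable_const 1)]
      refine integral_congr_ae (ae_of_all _ (fun t => ?_))
      field_simp [hne t y hy0]
      ring
    rw [hid]
    have hbd : ∀ᵐ (t : ℝ) ∂ρ, ‖(t:ℂ) / ((t:ℂ) - Complex.I*y)‖ ≤ R * (1/y) := by
      filter_upwards [hρae] with t ht
      rw [div_eq_mul_inv, norm_mul, hnr]
      exact mul_le_mul (htabs t ht) (hinv t y hy0) (norm_nonneg _) (le_of_lt hR)
    have := norm_integral_le_of_norm_le_const (μ := ρ)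
      (f := fun t : ℝ => (t:ℂ) / ((t:ℂ) - Complex.I*y)) (C := R * (1/y)) hbd
    calc ‖∫ t, (t:ℂ) / ((t:ℂ) - Complex.I*y) ∂ρ‖ ≤ R * (1/y) * (ρ Set.univ).toReal := this
      _ = R * (ρ Set.univ).toReal / y := by ring
  -- identify A
  have himy : ∀ y : ℝ, 0 < y → 0 < (Complex.I * (y:ℂ)).im := by
    intro y hy
    simpa using hy
  have hL : Tendsto (fun y : ℝ => (Complex.I*y + R) * Complex.exp (s y) - Complex.I*y)
      atTop (nhds ((R:ℂ) - m)) := by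
    have h1 : Tendsto (fun y : ℝ => Complex.I*y*s y + (m:ℂ)) atTop (nhds 0) := by
      simpa using T2.add_const (m:ℂ)
    have h2 : Tendsto (fun y : ℝ => Complex.I*y * (Complex.exp (s y) - 1 - s y)) atTop (nhds 0) := by
      refine tendsto_of_bound (4*R^2) y₀ (fun y hy => ?_)
      obtain ⟨hy0, hy1, hy2⟩ := hy₀fact y hy
      rw [sub_zero, norm_mul, hnormIy y hy0]
      have hq : ‖Complex.exp (s y) - 1 - s y‖ ≤ (2*R/y)^2 :=
        le_trans (exp_quad_bound (s y) (hs1 y hy))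
          (pow_le_pow_left₀ (norm_nonneg _) (hs_le y hy0) 2)
      calc y * ‖Complex.exp (s y) - 1 - s y‖ ≤ y * (2*R/y)^2 :=
            mul_le_mul_of_nonneg_left hq (le_of_lt hy0)
        _ = 4*R^2/y := by field_simp; ring
    have h3 : Tendsto (fun y : ℝ => (R:ℂ) * s y) atTop (nhds 0) := by
      refine tendsto_of_bound (2*R^2) 1 (fun y hy => ?_)
      have hy0 : (0:ℝ) < y := lt_of_lt_of_le one_pos hy
      rw [sub_zero, norm_mul, hnr, abs_of_pos hR]
      calc R * ‖s y‖ ≤ R * (2*R/y) := mul_le_mul_of_nonneg_left (hs_le y hy0) (le_of_lt hR)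
        _ = 2*R^2/y := by ring
    have h4 : Tendsto (fun y : ℝ => (R:ℂ) * (Complex.exp (s y) - 1 - s y)) atTop (nhds 0) := by
      refine tendsto_of_bound (4*R^3) y₀ (fun y hy => ?_)
      obtain ⟨hy0, hy1, hy2⟩ := hy₀fact y hy
      rw [sub_zero, norm_mul, hnr, abs_of_pos hR]
      have hq : ‖Complex.exp (s y) - 1 - s y‖ ≤ (2*R/y)^2 :=
        le_trans (exp_quad_bound (s y) (hs1 y hy))
          (pow_le_pow_left₀ (norm_nonneg _) (hs_le y hy0) 2)
      have hy2' : 1/y^2 ≤ 1/y := by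
        apply div_le_div_of_nonneg_left one_pos.le hy0
        nlinarith
      calc R * ‖Complex.exp (s y) - 1 - s y‖ ≤ R * (2*R/y)^2 :=
            mul_le_mul_of_nonneg_left hq (le_of_lt hR)
        _ = 4*R^3 * (1/y^2) := by field_simp; ring
        _ ≤ 4*R^3 * (1/y) := by
            apply mul_le_mul_of_nonneg_left hy2' (by positivity)
        _ = 4*R^3/y := by ring
    have hsum := ((h1.add h2).add h3).add h4
    have hsum' := hsum.add_const ((R:ℂ) - m)
    have hsum'' : Tendsto (fun y : ℝ => (Complex.I*y + R) * Complex.exp (s y) - Complex.I*y)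
        atTop (nhds ((0:ℂ) + 0 + 0 + 0 + ((R:ℂ) - m))) := hsum'.congr (fun y => by ring)
    simpa using hsum''
  have hRHS : Tendsto (fun y : ℝ => (Complex.I*y + R) * Complex.exp (s y) - Complex.I*y)
      atTop (nhds ((A:ℂ))) := by
    have hev : (fun y : ℝ => (A:ℂ) + ∫ t, ((t:ℂ) - Complex.I*y)⁻¹ ∂ρ) =ᶠ[atTop]
        (fun y : ℝ => (Complex.I*y + R) * Complex.exp (s y) - Complex.I*y) := by
      filter_upwards [eventually_gt_atTop 0] with y hy
      have h := heq (Complex.I*y) (himy y hy)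
      rw [h]
      ring
    have := (tendsto_const_nhds (x := (A:ℂ)) (f := atTop)).add hTlim0
    refine Tendsto.congr' hev (by simpa using this)
  have hAval : (A:ℂ) = (R:ℂ) - m := tendsto_nhds_unique hRHS hL
  -- conclude
  have hGT : (fun y : ℝ =>
      Complex.I*y * ((Complex.I*y + R) * Complex.exp (s y) - Complex.I*y - ((R:ℂ) - m)))
      =ᶠ[atTop] (fun y : ℝ => Complex.I*y * ∫ t, ((t:ℂ) - Complex.I*y)⁻¹ ∂ρ) := by
    filter_upwards [eventually_gt_atTop 0] with y hy
    have h := heq (Complex.I*y) (himy y hy)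
    rw [← hAval, h]
    ring
  have key : -(M:ℂ) + (-(m:ℂ)) * (-(m:ℂ)) / 2 + 0 + (R:ℂ) * (-(m:ℂ)) + 0 =
      -(((ρ Set.univ).toReal : ℝ) : ℂ) :=
    tendsto_nhds_unique (hG.congr' hGT) hTlimG
  have : (((ρ Set.univ).toReal : ℝ) : ℂ) = ((R * m + M - m^2/2 : ℝ) : ℂ) := by
    push_cast
    linear_combination key
  exact_mod_cast this

end KreinAux

/-- `ξ` is a Krein function on `(-R,R)` whose associated Herglotz function
`H(z) = (z+R)·exp(∫ ξ(t)dt/(t−z))` has Herglotz representation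
`H(z) = z + A + ∫ dρ(t)/(t−z)`. -/
def IsKreinHerglotzPair (R : ℝ) (ξ : ℝ → ℝ) (A : ℝ) (ρ : MeasureTheory.Measure ℝ) : Prop :=
  Measurable ξ ∧ (∀ t, 0 ≤ ξ t ∧ ξ t ≤ 1) ∧
  IsFiniteMeasure ρ ∧ ρ (Set.Ioo (-R) R)ᶜ = 0 ∧
  ∀ z : ℂ, 0 < z.im →
    (z + (R : ℂ)) * Complex.exp (∫ t in Set.Ioo (-R) R, (ξ t : ℂ) / ((t : ℂ) - z)) =
      z + (A : ℂ) + ∫ t, ((t : ℂ) - z)⁻¹ ∂ρ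

theorem totalMass_uniformly_continuous_in_L1 (R : ℝ) (hR : 0 < R) :
    ∀ ε > (0 : ℝ), ∃ δ > (0 : ℝ),
      ∀ (ξ₁ ξ₂ : ℝ → ℝ) (A₁ A₂ : ℝ) (ρ₁ ρ₂ : Measure ℝ),
        IsKreinHerglotzPair R ξ₁ A₁ ρ₁ → IsKreinHerglotzPair R ξ₂ A₂ ρ₂ →
        (∫ t in Set.Ioo (-R) R, |ξ₁ t - ξ₂ t|) < δ →
        |(ρ₁ Set.univ).toReal - (ρ₂ Set.univ).toReal| < ε := by
  intro ε hε
  refine ⟨ε / (4*R + 1), by positivity, ?_⟩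
  intro ξ₁ ξ₂ A₁ A₂ ρ₁ ρ₂ h₁ h₂ hδ
  obtain ⟨hmes₁, hb₁, hf₁, hss₁, he₁⟩ := h₁
  obtain ⟨hmes₂, hb₂, hf₂, hss₂, he₂⟩ := h₂
  have F₁ := KreinAux.mass_formula hR hmes₁ hb₁ hf₁ hss₁ he₁
  have F₂ := KreinAux.mass_formula hR hmes₂ hb₂ hf₂ hss₂ he₂
  set Io := Set.Ioo (-R) R with hIo_def
  have hIoM : MeasurableSet Io := measurableSet_Ioo
  have hvol : volume Io = ENNReal.ofReal (2*R) := by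
    rw [hIo_def, Real.volume_Ioo]; congr 1; ring
  have hvolR : (volume Io).toReal = 2*R := by
    rw [hvol, ENNReal.toReal_ofReal (by linarith)]
  haveI : IsFiniteMeasure (volume.restrict Io) :=
    ⟨by rw [Measure.restrict_apply_univ, hvol]; exact ENNReal.ofReal_lt_top⟩
  have htabs : ∀ t ∈ Io, |t| ≤ R := by
    intro t ht
    rw [hIo_def] at ht
    exact abs_le.2 ⟨le_of_lt ht.1, le_of_lt ht.2⟩
  have intOn : ∀ (g : ℝ → ℝ) (c : ℝ), Measurable g → (∀ t ∈ Io, |g t| ≤ c) →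
      IntegrableOn g Io volume := by
    intro g c hg hb
    refine Integrable.mono' (integrable_const c) hg.aestronglyMeasurable ?_
    exact (ae_restrict_iff' hIoM).2 (ae_of_all _ hb)
  have habs₁ : ∀ t, |ξ₁ t| ≤ 1 := fun t => abs_le.2 ⟨by linarith [(hb₁ t).1], (hb₁ t).2⟩
  have habs₂ : ∀ t, |ξ₂ t| ≤ 1 := fun t => abs_le.2 ⟨by linarith [(hb₂ t).1], (hb₂ t).2⟩
  have i₁ : IntegrableOn ξ₁ Io volume := intOn _ 1 hmes₁ (fun t _ => habs₁ t)
  have i₂ : IntegrableOn ξ₂ Io volume := intOn _ 1 hmes₂ (fun t _ => habs₂ t)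
  have it₁ : IntegrableOn (fun t => t * ξ₁ t) Io volume := by
    refine intOn _ R (measurable_id.mul hmes₁) (fun t ht => ?_)
    rw [abs_mul]
    calc |t| * |ξ₁ t| ≤ R * 1 :=
          mul_le_mul (htabs t ht) (habs₁ t) (abs_nonneg _) (le_of_lt hR)
      _ = R := mul_one R
  have it₂ : IntegrableOn (fun t => t * ξ₂ t) Io volume := by
    refine intOn _ R (measurable_id.mul hmes₂) (fun t ht => ?_)
    rw [abs_mul]
    calc |t| * |ξ₂ t| ≤ R * 1 :=
          mul_le_mul (htabs t ht) (habs₂ t) (abs_nonneg _) (le_of_lt hR)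
      _ = R := mul_one R
  have isub : IntegrableOn (fun t => ξ₁ t - ξ₂ t) Io volume := i₁.sub i₂
  have iabs : IntegrableOn (fun t => |ξ₁ t - ξ₂ t|) Io volume := isub.abs
  set D := ∫ t in Io, |ξ₁ t - ξ₂ t| with hD_def
  have hD0 : 0 ≤ D := integral_nonneg (fun t => abs_nonneg _)
  set m₁ := ∫ t in Io, ξ₁ t with hm₁_def
  set m₂ := ∫ t in Io, ξ₂ t with hm₂_def
  set M₁ := ∫ t in Io, t * ξ₁ t with hM₁_def
  set M₂ := ∫ t in Io, t * ξ₂ t with hM₂_def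
  -- |m₁ - m₂| ≤ D
  have h1 : |m₁ - m₂| ≤ D := by
    rw [hm₁_def, hm₂_def, ← integral_sub i₁ i₂]
    calc |∫ t in Io, (ξ₁ t - ξ₂ t)| ≤ ∫ t in Io, |ξ₁ t - ξ₂ t| := by
          simpa [Real.norm_eq_abs] using
            norm_integral_le_integral_norm (μ := volume.restrict Io) (f := fun t => ξ₁ t - ξ₂ t)
      _ = D := rfl
  -- |M₁ - M₂| ≤ R * D
  have h2 : |M₁ - M₂| ≤ R * D := by
    rw [hM₁_def, hM₂_def, ← integral_sub it₁ it₂]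
    have step1 : |∫ t in Io, (t * ξ₁ t - t * ξ₂ t)| ≤ ∫ t in Io, |t * ξ₁ t - t * ξ₂ t| := by
      simpa [Real.norm_eq_abs] using
        norm_integral_le_integral_norm (μ := volume.restrict Io)
          (f := fun t => t * ξ₁ t - t * ξ₂ t)
    have step2 : (∫ t in Io, |t * ξ₁ t - t * ξ₂ t|) ≤ ∫ t in Io, R * |ξ₁ t - ξ₂ t| := by
      refine setIntegral_mono_on (it₁.sub it₂).abs (iabs.const_mul R) hIoM (fun t ht => ?_)
      have : t * ξ₁ t - t * ξ₂ t = t * (ξ₁ t - ξ₂ t) := by ring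
      rw [this, abs_mul]
      exact mul_le_mul_of_nonneg_right (htabs t ht) (abs_nonneg _)
    have step3 : (∫ t in Io, R * |ξ₁ t - ξ₂ t|) = R * D := by
      rw [hD_def, integral_const_mul]
    linarith
  -- 0 ≤ mᵢ ≤ 2R
  have hm₁b : 0 ≤ m₁ ∧ m₁ ≤ 2*R := by
    constructor
    · exact setIntegral_nonneg hIoM (fun t _ => (hb₁ t).1)
    · calc m₁ ≤ ∫ _t in Io, (1:ℝ) := setIntegral_mono_on i₁ (integrable_const 1) hIoM
            (fun t _ => (hb₁ t).2)
        _ = 2*R := by rw [setIntegral_const, measureReal_def, hvolR, smul_eq_mul, mul_one]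
  have hm₂b : 0 ≤ m₂ ∧ m₂ ≤ 2*R := by
    constructor
    · exact setIntegral_nonneg hIoM (fun t _ => (hb₂ t).1)
    · calc m₂ ≤ ∫ _t in Io, (1:ℝ) := setIntegral_mono_on i₂ (integrable_const 1) hIoM
            (fun t _ => (hb₂ t).2)
        _ = 2*R := by rw [setIntegral_const, measureReal_def, hvolR, smul_eq_mul, mul_one]
  rw [F₁, F₂]
  obtain ⟨ha1, ha2⟩ := abs_le.1 h1
  obtain ⟨hb1', hb2'⟩ := abs_le.1 h2
  have hDδ : D < ε / (4*R + 1) := hδ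
  have hD' : D * (4*R + 1) < ε := (lt_div_iff₀ (by positivity)).1 hDδ
  have hsumnn : 0 ≤ m₁ + m₂ := add_nonneg hm₁b.1 hm₂b.1
  have hsum4R : m₁ + m₂ ≤ 4*R := by linarith [hm₁b.2, hm₂b.2]
  have hp1 : (m₁ - m₂) * (m₁ + m₂) ≤ D * (m₁ + m₂) :=
    mul_le_mul_of_nonneg_right ha2 hsumnn
  have hp2 : -((m₁ - m₂) * (m₁ + m₂)) ≤ D * (m₁ + m₂) := by
    have := mul_le_mul_of_nonneg_right (by linarith : -(m₁ - m₂) ≤ D) hsumnn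
    linarith [this]
  have hp3 : D * (m₁ + m₂) ≤ D * (4*R) := mul_le_mul_of_nonneg_left hsum4R hD0
  have hp4 : R * (m₁ - m₂) ≤ R * D := mul_le_mul_of_nonneg_left ha2 (le_of_lt hR)
  have hp5 : -(R * D) ≤ R * (m₁ - m₂) := by
    have := mul_le_mul_of_nonneg_left ha1 (le_of_lt hR)
    linarith [this]
  have hsq : m₁^2 - m₂^2 = (m₁ - m₂) * (m₁ + m₂) := by ring
  rw [abs_lt]
  constructor
  · linarith [hp1, hp2, hp3, hp4, hp5, hD', hD0]
  · linarith [hp1, hp2, hp3, hp4, hp5, hD', hD0]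
end
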